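/- arXiv:2110.08372 — 3 statements merged into one kernel-verified Lean document; each statement's English description precedes it below -/
import Mathlib

section
/- Let γ : ℝ → ℝ be 1-periodic, bounded, with nonzero mean ⟨γ⟩, and Γ(t) = ∫₀ᵗ γ(s) ds. Then for each n ∈ ℤ, the preimage Γ⁻¹([n, n+1)) has Lebesgue measure at most (1 + 4‖γ‖_{L^∞})/|⟨γ⟩|. -/
open MeasureTheory intervalIntegral

/-- For `γ` 1-periodic, bounded, locally integrable, with nonzero mean, the preimage
`Γ⁻¹([n, n+1))` has Lebesgue measure at most `(1 + 4M)/|⟨γ⟩|`. -/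
theorem stmt2 (γ : ℝ → ℝ) (M : ℝ)
    (hper : ∀ t : ℝ, γ (t + 1) = γ t)
    (hint : ∀ a b : ℝ, IntervalIntegrable γ volume a b)
    (hbound : ∀ᵐ t : ℝ, |γ t| ≤ M)
    (hmean : (∫ s in (0:ℝ)..1, γ s) ≠ 0) :
    ∀ n : ℤ,
      volume {t : ℝ | (n : ℝ) ≤ (∫ s in (0:ℝ)..t, γ s) ∧ (∫ s in (0:ℝ)..t, γ s) < (n : ℝ) + 1}
        ≤ ENNReal.ofReal ((1 + 4 * M) / |∫ s in (0:ℝ)..1, γ s|) := by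
  intro n
  set c : ℝ := ∫ s in (0:ℝ)..1, γ s with hc
  have hp : Function.Periodic γ 1 := hper
  have hM0 : 0 ≤ M := by
    obtain ⟨t, ht⟩ := hbound.exists
    exact (abs_nonneg _).trans ht
  have habs : ∀ a b : ℝ, a ≤ b → b ≤ a + 1 → |∫ s in a..b, γ s| ≤ M := by
    intro a b hab hba
    have h := intervalIntegral.norm_integral_le_abs_of_norm_le (μ := volume) (f := γ)
      (a := a) (b := b) (g := fun _ => M)
      (by filter_upwards [ae_restrict_of_ae hbound] with t ht using ht)
      intervalIntegrable_const
    rw [intervalIntegral.integral_const, smul_eq_mul] at h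
    have hM' : |(b - a) * M| = (b - a) * M := abs_of_nonneg (by nlinarith)
    calc |∫ s in a..b, γ s| ≤ |(b - a) * M| := h
      _ = (b - a) * M := hM'
      _ ≤ 1 * M := by nlinarith
      _ = M := one_mul M
  have hcM : |c| ≤ M := habs 0 1 zero_le_one (by norm_num)
  have hc0 : 0 < |c| := abs_pos.2 hmean
  have key : ∀ t₁ t₂ : ℝ, t₁ ≤ t₂ →
      ((n : ℝ) ≤ (∫ s in (0:ℝ)..t₁, γ s) ∧ (∫ s in (0:ℝ)..t₁, γ s) < (n : ℝ) + 1) →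
      ((n : ℝ) ≤ (∫ s in (0:ℝ)..t₂, γ s) ∧ (∫ s in (0:ℝ)..t₂, γ s) < (n : ℝ) + 1) →
      t₂ - t₁ ≤ (1 + 4 * M) / |c| := by
    intro t₁ t₂ h12 ⟨h1l, h1r⟩ ⟨h2l, h2r⟩
    set m : ℤ := ⌊t₂ - t₁⌋ with hm
    have hm0 : (0:ℝ) ≤ (m : ℝ) := by
      exact_mod_cast Int.floor_nonneg.2 (by linarith)
    have hfl : (m : ℝ) ≤ t₂ - t₁ := Int.floor_le _
    have hfu : t₂ - t₁ < (m : ℝ) + 1 := Int.lt_floor_add_one _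
    have hsplit : (∫ s in t₁..t₂, γ s)
        = (∫ s in t₁..t₁ + (m:ℝ), γ s) + ∫ s in t₁ + (m:ℝ)..t₂, γ s :=
      (integral_add_adjacent_intervals (hint _ _) (hint _ _)).symm
    have hperint : (∫ s in t₁..t₁ + (m:ℝ), γ s) = (m : ℝ) * c := by
      have h1 := hp.intervalIntegral_add_zsmul_eq m t₁ hint
      have h2 := hp.intervalIntegral_add_eq t₁ 0
      rw [h2, zero_add] at h1
      simpa [zsmul_eq_mul] using h1
    have hd : (∫ s in t₁..t₂, γ s)
        = (∫ s in (0:ℝ)..t₂, γ s) - ∫ s in (0:ℝ)..t₁, γ s :=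
      (integral_interval_sub_left (hint 0 t₂) (hint 0 t₁)).symm
    have hA : |∫ s in t₁..t₂, γ s| < 1 := by
      rw [hd]; rw [abs_lt]; constructor <;> linarith
    have hB : |∫ s in t₁ + (m:ℝ)..t₂, γ s| ≤ M :=
      habs _ _ (by linarith) (by linarith)
    have hmc : (m : ℝ) * |c| ≤ 1 + M := by
      have heq : (m : ℝ) * c
          = (∫ s in t₁..t₂, γ s) - ∫ s in t₁ + (m:ℝ)..t₂, γ s := by
        rw [hsplit, hperint]; ring
      have h3 : |(m : ℝ) * c| ≤ 1 + M := by
        rw [heq]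
        calc |(∫ s in t₁..t₂, γ s) - ∫ s in t₁ + (m:ℝ)..t₂, γ s|
            ≤ |∫ s in t₁..t₂, γ s| + |∫ s in t₁ + (m:ℝ)..t₂, γ s| := abs_sub _ _
          _ ≤ 1 + M := by linarith
      rwa [abs_mul, abs_of_nonneg hm0] at h3
    rw [le_div_iff₀ hc0]
    nlinarith [mul_le_mul_of_nonneg_right hfu.le (le_of_lt hc0)]
  refine le_trans (Real.volume_le_diam _) (EMetric.diam_le ?_)
  intro x hx y hy
  rw [edist_dist, ENNReal.ofReal_le_ofReal_iff (by positivity)]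
  rcases le_total x y with h | h
  · rw [Real.dist_eq, abs_of_nonpos (by linarith)]
    have := key x y h hx hy
    linarith
  · rw [Real.dist_eq, abs_of_nonneg (by linarith)]
    have := key y x h hy hx
    linarith
end

section
/- Suppose positive reals m, k, p, and constants m_R, k_R, p_R > 0 and γ_+ > 0 satisfy: (i) the Gagliardo–Nirenberg bound p ≤ C₀ √m · k^{3/2} with C₀ = p_R/(√m_R · k_R^{3/2}); (ii) m · ((γ_+/2)k − p/4) ≤ (1−δ) m_R · (γ_+/6) k_R for some δ ∈ (0,1); and (iii) γ_+ k_R / 3 = p_R / 4. Then setting y = √(m k)/√(m_R k_R), one has 1 − δ ≥ 3y² − 2y³. -/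
/-- Abstract energy-trapping computation: from the Gagliardo–Nirenberg bound
`p ≤ C₀ √m k^{3/2}` with sharp constant `C₀ = p_R/(√m_R k_R^{3/2})`, the
mass-energy bound `m((γ₊/2)k - p/4) ≤ (1-δ) m_R (γ₊/6) k_R`, and the Pohozaev
relation `γ₊ k_R/3 = p_R/4`, the quantity `y = √(mk)/√(m_R k_R)` satisfies
`1 - δ ≥ 3y² - 2y³`. -/
theorem stmt14 (γplus m k p mR kR pR δ : ℝ)
    (hγ : 0 < γplus) (hm : 0 < m) (hk : 0 < k) (hp : 0 < p)
    (hmR : 0 < mR) (hkR : 0 < kR) (hpR : 0 < pR)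
    (hδ0 : 0 < δ) (hδ1 : δ < 1)
    (hGN : p ≤ (pR / (Real.sqrt mR * kR ^ ((3:ℝ)/2))) * Real.sqrt m * k ^ ((3:ℝ)/2))
    (hME : m * ((γplus / 2) * k - p / 4) ≤ (1 - δ) * (mR * ((γplus / 6) * kR)))
    (hPoh : γplus * kR / 3 = pR / 4) :
    1 - δ ≥ 3 * (Real.sqrt (m * k) / Real.sqrt (mR * kR)) ^ 2
      - 2 * (Real.sqrt (m * k) / Real.sqrt (mR * kR)) ^ 3 := by
  set sm := Real.sqrt m with hsm_def
  set sk := Real.sqrt k with hsk_def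
  set smR := Real.sqrt mR with hsmR_def
  set skR := Real.sqrt kR with hskR_def
  have hsm : 0 < sm := Real.sqrt_pos.mpr hm
  have hsk : 0 < sk := Real.sqrt_pos.mpr hk
  have hsmR : 0 < smR := Real.sqrt_pos.mpr hmR
  have hskR : 0 < skR := Real.sqrt_pos.mpr hkR
  have hm2 : sm ^ 2 = m := Real.sq_sqrt hm.le
  have hk2 : sk ^ 2 = k := Real.sq_sqrt hk.le
  have hmR2 : smR ^ 2 = mR := Real.sq_sqrt hmR.le
  have hkR2 : skR ^ 2 = kR := Real.sq_sqrt hkR.le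
  have hk32 : k ^ ((3:ℝ)/2) = sk ^ 3 := by
    rw [show (3:ℝ)/2 = 1 + 1/2 by norm_num, Real.rpow_add hk, Real.rpow_one,
      ← Real.sqrt_eq_rpow, ← hsk_def, ← hk2]; ring
  have hkR32 : kR ^ ((3:ℝ)/2) = skR ^ 3 := by
    rw [show (3:ℝ)/2 = 1 + 1/2 by norm_num, Real.rpow_add hkR, Real.rpow_one,
      ← Real.sqrt_eq_rpow, ← hskR_def, ← hkR2]; ring
  rw [hk32, hkR32] at hGN
  -- Pohozaev: pR = 4 γ skR² / 3
  have hpR' : pR = 4 * γplus * skR ^ 2 / 3 := by rw [hkR2]; linarith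
  -- GN reduces to: p * (smR * skR) ≤ (4γ/3) sm sk³
  have h1 : p * (smR * skR) ≤ 4 * γplus / 3 * (sm * sk ^ 3) := by
    have h := mul_le_mul_of_nonneg_right hGN (by positivity : (0:ℝ) ≤ smR * skR)
    have heq : pR / (smR * skR ^ 3) * sm * sk ^ 3 * (smR * skR) =
        4 * γplus / 3 * (sm * sk ^ 3) := by
      rw [hpR']; field_simp
    linarith [heq ▸ h]
  -- rewrite hME in terms of square roots
  rw [← hm2, ← hk2, ← hmR2, ← hkR2] at hME
  have hA := mul_le_mul_of_nonneg_left hME (le_of_lt (mul_pos hsmR hskR))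
  have hB := mul_le_mul_of_nonneg_left h1 (sq_nonneg sm)
  have key : 3 * (sm * sk) ^ 2 * (smR * skR) - 2 * (sm * sk) ^ 3
      ≤ (1 - δ) * (smR * skR) ^ 3 := by
    have hcancel : γplus * (3 * (sm * sk) ^ 2 * (smR * skR) - 2 * (sm * sk) ^ 3)
        ≤ γplus * ((1 - δ) * (smR * skR) ^ 3) := by nlinarith [hA, hB]
    exact le_of_mul_le_mul_left hcancel hγ
  have hmk : Real.sqrt (m * k) = sm * sk := Real.sqrt_mul hm.le k
  have hmkR : Real.sqrt (mR * kR) = smR * skR := Real.sqrt_mul hmR.le kR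
  rw [hmk, hmkR, ge_iff_le,
    show 3 * ((sm * sk) / (smR * skR)) ^ 2 - 2 * ((sm * sk) / (smR * skR)) ^ 3 =
      (3 * (sm * sk) ^ 2 * (smR * skR) - 2 * (sm * sk) ^ 3) / (smR * skR) ^ 3 by
        field_simp,
    div_le_iff₀ (by positivity)]
  linarith [key]
end

section
/- Let γ be 1-periodic, piecewise continuous with N discontinuities per period, bounded by M, bounded below in absolute value by c₀ > 0, and with mean ⟨γ⟩ > 0. Let 𝕀 = {t : γ(t) > 0}. Then for each n ∈ ℤ, the set Γ⁻¹([n, n+1)) ∩ 𝕀 is a union of at most K_γ := 1 + N(1 + (1 + 4M)/⟨γ⟩) intervals on each of which Γ is injective, where Γ(t) = ∫₀ᵗ γ. -/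
open MeasureTheory intervalIntegral

/-- Covering-number bound (2.5): for `γ` 1-periodic with exactly `N` discontinuities
per period, `0 < c₀ ≤ |γ| ≤ M`, and mean `⟨γ⟩ > 0`, for each `n ∈ ℤ` the set
`Γ⁻¹([n,n+1)) ∩ {γ > 0}` is a union of at most `K_γ = 1 + N(1 + (1+4M)/⟨γ⟩)`
intervals on each of which `Γ` is injective. -/
theorem stmt19 (γ : ℝ → ℝ) (M c₀ : ℝ) (N : ℕ)
    (hper : ∀ t : ℝ, γ (t + 1) = γ t)
    (hc₀ : 0 < c₀)
    (hbound : ∀ t : ℝ, c₀ ≤ |γ t| ∧ |γ t| ≤ M)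
    (hint : ∀ a b : ℝ, IntervalIntegrable γ volume a b)
    (hdisc : ∃ S : Finset ℝ, S.card = N ∧
      ∀ t ∈ Set.Ico (0:ℝ) 1, (¬ ContinuousAt γ t ↔ t ∈ S))
    (hmean : 0 < ∫ s in (0:ℝ)..1, γ s) :
    ∀ n : ℤ, ∃ 𝒰 : Finset (Set ℝ),
      (𝒰.card : ℝ) ≤ 1 + (N : ℝ) * (1 + (1 + 4 * M) / (∫ s in (0:ℝ)..1, γ s)) ∧
      ((fun t : ℝ => ∫ s in (0:ℝ)..t, γ s) ⁻¹' Set.Ico (n : ℝ) ((n : ℝ) + 1))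
          ∩ {t : ℝ | 0 < γ t} = ⋃₀ (𝒰 : Set (Set ℝ)) ∧
      ∀ U ∈ 𝒰, U.OrdConnected ∧ Set.InjOn (fun t : ℝ => ∫ s in (0:ℝ)..t, γ s) U := by
  intro n
  classical
  obtain ⟨S, hScard, hSchar⟩ := hdisc
  have hper' : Function.Periodic γ 1 := hper
  have hM0 : 0 < M := lt_of_lt_of_le hc₀ (le_trans (hbound 0).1 (hbound 0).2)
  set I : ℝ := ∫ s in (0:ℝ)..1, γ s with hIdef
  have hI : 0 < I := hmean
  set Γ : ℝ → ℝ := fun t : ℝ => ∫ s in (0:ℝ)..t, γ s with hΓdef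
  set L : ℝ := (1 + 4 * M) / I with hLdef
  have hL0 : 0 < L := div_pos (by linarith) hI
  set A : Set ℝ := Γ ⁻¹' Set.Ico (n:ℝ) ((n:ℝ)+1) ∩ {t : ℝ | 0 < γ t} with hAdef
  have hAmem : ∀ t : ℝ, t ∈ A ↔ ((n:ℝ) ≤ Γ t ∧ Γ t < (n:ℝ)+1) ∧ 0 < γ t := fun t => Iff.rfl
  -- continuity shift
  have hγk : ∀ (x : ℝ) (k : ℤ), γ (x + k) = γ x := by
    intro x k
    simpa using (hper'.int_mul k) x
  have hshift : ∀ (t : ℝ) (k : ℤ), ContinuousAt γ (t + k) ↔ ContinuousAt γ t := by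
    intro t k
    have hcomp : γ ∘ (Homeomorph.addRight (k:ℝ)) = γ := by
      funext x
      exact hγk x k
    have h := (Homeomorph.addRight (k:ℝ)).comp_continuousAt_iff' γ t
    rw [hcomp] at h
    simpa using h.symm
  have hdisc_iff : ∀ t : ℝ, ¬ ContinuousAt γ t ↔ Int.fract t ∈ S := by
    intro t
    have h1 : Int.fract t + (⌊t⌋ : ℝ) = t := by rw [Int.fract]; ring
    have h2 := hshift (Int.fract t) ⌊t⌋
    rw [h1] at h2
    rw [← hSchar (Int.fract t) ⟨Int.fract_nonneg t, Int.fract_lt_one t⟩]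
    exact not_congr h2
  -- integral helpers
  have hΓdiff : ∀ u v : ℝ, Γ v - Γ u = ∫ s in u..v, γ s := fun u v =>
    integral_interval_sub_left (hint 0 v) (hint 0 u)
  have habs : ∀ u v : ℝ, |∫ s in u..v, γ s| ≤ M * |v - u| := by
    intro u v
    have h := intervalIntegral.norm_integral_le_of_norm_le_const (C := M) (f := γ)
      (a := u) (b := v) (fun x _ => by rw [Real.norm_eq_abs]; exact (hbound x).2)
    simpa [Real.norm_eq_abs] using h
  have hIM : I ≤ M := by
    have h := habs 0 1
    rw [← hIdef] at h
    have h1 : |(1:ℝ) - 0| = 1 := by norm_num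
    rw [h1, mul_one] at h
    linarith [le_abs_self I]
  have hperint : ∀ s : ℝ, (∫ x in s..(s+1), γ x) = I := by
    intro s
    rw [hIdef]
    simpa using hper'.intervalIntegral_add_eq s 0
  have hnatint : ∀ (s : ℝ) (k : ℕ), (∫ x in s..(s + (k:ℝ)), γ x) = (k:ℝ) * I := by
    intro s k
    induction k with
    | zero => simp
    | succ m ih =>
      have h1 : (∫ x in s..(s+(m:ℝ)), γ x) + (∫ x in (s+(m:ℝ))..(s+(m:ℝ)+1), γ x)
          = ∫ x in s..(s+(m:ℝ)+1), γ x :=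
        integral_add_adjacent_intervals (hint _ _) (hint _ _)
      have h2 : s + ((m+1 : ℕ):ℝ) = s + (m:ℝ) + 1 := by push_cast; ring
      rw [h2, ← h1, ih, hperint (s + (m:ℝ))]
      push_cast; ring
  have hmono : ∀ u v : ℝ, u ≤ v → (∀ x ∈ Set.Ioc u v, c₀ ≤ γ x) →
      c₀ * (v - u) ≤ ∫ s in u..v, γ s := by
    intro u v huv h
    rw [intervalIntegral.integral_of_le huv]
    have hvol : (volume (Set.Ioc u v)).toReal = v - u := by
      rw [Real.volume_Ioc, ENNReal.toReal_ofReal (by linarith)]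
    calc c₀ * (v - u) = (volume (Set.Ioc u v)).toReal • c₀ := by
          rw [hvol, smul_eq_mul, mul_comm]
      _ = ∫ _ in Set.Ioc u v, c₀ ∂volume := (setIntegral_const c₀).symm
      _ ≤ ∫ x in Set.Ioc u v, γ x ∂volume :=
          setIntegral_mono_on
            (integrableOn_const (by rw [Real.volume_Ioc]; exact ENNReal.ofReal_ne_top))
            ((hint u v).1) measurableSet_Ioc h
  -- diameter bound
  have hdiam : ∀ s t : ℝ, s ∈ A → t ∈ A → t - s ≤ L := by
    intro s t hs ht
    rcases le_or_gt t s with h | h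
    · linarith
    · set k := ⌊t - s⌋₊ with hkdef
      have hk1 : (k:ℝ) ≤ t - s := Nat.floor_le (by linarith)
      have hk2 : t - s < k + 1 := Nat.lt_floor_add_one _
      have e1 : (∫ x in s..(s+(k:ℝ)), γ x) + (∫ x in (s+(k:ℝ))..t, γ x) = ∫ x in s..t, γ x :=
        integral_add_adjacent_intervals (hint _ _) (hint _ _)
      have e2 := hnatint s k
      have e3 := habs (s+(k:ℝ)) t
      have e4 : |t - (s+(k:ℝ))| ≤ 1 := by
        rw [abs_of_nonneg (by linarith)]; linarith
      have e5 : Γ t - Γ s < 1 := by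
        obtain ⟨⟨hs1, hs2⟩, _⟩ := (hAmem s).1 hs
        obtain ⟨⟨ht1, ht2⟩, _⟩ := (hAmem t).1 ht
        linarith
      rw [hΓdiff s t] at e5
      have e6 : M * |t - (s+(k:ℝ))| ≤ M * 1 := mul_le_mul_of_nonneg_left e4 hM0.le
      have e7 : -(M) ≤ ∫ x in (s+(k:ℝ))..t, γ x := by
        have := (abs_le.1 (e3.trans e6)).1
        linarith
      have e8 : (k:ℝ) * I < 1 + M := by
        rw [← e2]
        linarith
      have e9 : (k:ℝ) ≤ (1 + M)/I := by
        rw [le_div_iff₀ hI]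
        linarith
      have e10 : (1 + M)/I + 1 ≤ L := by
        have h' : (1 + M)/I + 1 = (1 + M + I)/I := by field_simp
        rw [h', hLdef, div_le_div_iff₀ hI hI]
        nlinarith

      linarith
  -- empty / nonempty
  rcases Set.eq_empty_or_nonempty A with hAe | ⟨t₀, ht₀⟩
  · refine ⟨∅, ?_, ?_, ?_⟩
    · have h2 : (0:ℝ) ≤ (N:ℝ) * (1 + L) := by
        apply mul_nonneg (Nat.cast_nonneg N); linarith
      simp only [Finset.card_empty, Nat.cast_zero]
      linarith
    · simpa using hAe
    · simp
  · have hbdd : BddBelow A := ⟨t₀ - L, fun s hs => by have := hdiam s t₀ hs ht₀; linarith⟩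
    set a : ℝ := sInf A with hadef
    have hrange : ∀ t ∈ A, a ≤ t ∧ t ≤ a + L := by
      intro t ht
      refine ⟨csInf_le hbdd ht, ?_⟩
      have h2 : t - L ≤ a :=
        le_csInf ⟨t₀, ht₀⟩ (fun s hs => by have := hdiam s t hs ht; linarith)
      linarith
    set T : Finset ℝ :=
      S.biUnion (fun s => (Finset.Ioc ⌊a - s⌋ ⌊a + L - s⌋).image (fun k : ℤ => s + (k:ℝ)))
      with hTdef
    have hTmem : ∀ d : ℝ, ¬ ContinuousAt γ d → a < d → d ≤ a + L → d ∈ T := by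
      intro d hd h1 h2
      have hs : Int.fract d ∈ S := (hdisc_iff d).1 hd
      have hfr : Int.fract d + (⌊d⌋:ℝ) = d := by rw [Int.fract]; ring
      refine Finset.mem_biUnion.2 ⟨Int.fract d, hs,
        Finset.mem_image.2 ⟨⌊d⌋, Finset.mem_Ioc.2 ⟨?_, ?_⟩, hfr⟩⟩
      · exact Int.floor_lt.2 (by push_cast; linarith)
      · exact Int.le_floor.2 (by push_cast; linarith)
    have hTgt : ∀ d ∈ T, a < d := by
      intro d hd
      obtain ⟨s, hsS, hd2⟩ := Finset.mem_biUnion.1 hd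
      obtain ⟨k, hk, rfl⟩ := Finset.mem_image.1 hd2
      have h1 : a - s < (k:ℝ) := by exact_mod_cast Int.floor_lt.1 (Finset.mem_Ioc.1 hk).1
      linarith
    have hTcard : (T.card : ℝ) ≤ (N:ℝ) * (L + 1) := by
      have h1 : T.card ≤ S.card * (⌈L⌉.toNat) := by
        refine le_trans Finset.card_biUnion_le ?_
        rw [← smul_eq_mul]
        refine Finset.sum_le_card_nsmul S _ _ ?_
        intro s _
        refine le_trans Finset.card_image_le ?_
        rw [Int.card_Ioc]
        apply Int.toNat_le_toNat
        have h3 : (⌊a + L - s⌋ : ℝ) < (⌊a - s⌋:ℝ) + (⌈L⌉:ℝ) + 1 := by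
          have := Int.floor_le (a + L - s)
          have := Int.lt_floor_add_one (a - s)
          have := Int.le_ceil L
          linarith
        have h4 : ⌊a + L - s⌋ < ⌊a - s⌋ + ⌈L⌉ + 1 := by exact_mod_cast h3
        omega
      have h5 : ((⌈L⌉.toNat : ℕ) : ℝ) ≤ L + 1 := by
        have h6 : ((⌈L⌉.toNat : ℕ) : ℝ) = ((⌈L⌉ : ℤ) : ℝ) := by
          exact_mod_cast congrArg (fun z : ℤ => (z : ℝ))
            (Int.toNat_of_nonneg (Int.ceil_nonneg hL0.le))
        rw [h6]
        linarith [Int.ceil_lt_add_one L]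
      calc (T.card : ℝ) ≤ ((S.card * ⌈L⌉.toNat : ℕ) : ℝ) := by exact_mod_cast h1
        _ = (N:ℝ) * ((⌈L⌉.toNat : ℕ):ℝ) := by push_cast [hScard]; ring
        _ ≤ (N:ℝ) * (L+1) := mul_le_mul_of_nonneg_left h5 (Nat.cast_nonneg N)
    -- the pieces
    set 𝒰 : Finset (Set ℝ) :=
      (insert (a-1) T).image (fun c => A ∩ {t : ℝ | ∀ d ∈ T, (d ≤ t ↔ d ≤ c)}) with h𝒰def
    -- key positivity lemma
    have hkey : ∀ c u v : ℝ, u ∈ A ∩ {x : ℝ | ∀ d ∈ T, (d ≤ x ↔ d ≤ c)} →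
        v ∈ A ∩ {x : ℝ | ∀ d ∈ T, (d ≤ x ↔ d ≤ c)} → u < v →
        ∀ x ∈ Set.Ioc u v, c₀ ≤ γ x := by
      intro c u v hu hv huv
      have hnod : ∀ d ∈ Set.Ioc u v, ContinuousAt γ d := by
        intro d hd
        by_contra hcd
        have hdT : d ∈ T :=
          hTmem d hcd (lt_of_le_of_lt (hrange u hu.1).1 hd.1)
            (le_trans hd.2 (hrange v hv.1).2)
        have h1 := hu.2 d hdT
        have h2 := hv.2 d hdT
        have h3 : d ≤ u := h1.2 (h2.1 hd.2)
        linarith [hd.1]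
      have hvpos : (0:ℝ) < γ v := ((hAmem v).1 hv.1).2
      intro x hx
      have hxpos : 0 < γ x := by
        rcases lt_or_ge 0 (γ x) with h | h
        · exact h
        exfalso
        have hxv : x < v := by
          rcases eq_or_lt_of_le hx.2 with h' | h'
          · exfalso; rw [h'] at h; linarith
          · exact h'
        have hcont : ContinuousOn γ (Set.Icc x v) := fun y hy =>
          (hnod y ⟨lt_of_lt_of_le hx.1 hy.1, hy.2⟩).continuousWithinAt
        have him := intermediate_value_Icc hxv.le hcont
        have h0 : (0:ℝ) ∈ Set.Icc (γ x) (γ v) := ⟨h, hvpos.le⟩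
        obtain ⟨z, hz, hz0⟩ := him h0
        have hb := (hbound z).1
        rw [hz0] at hb
        simp at hb
        linarith
      have hb := (hbound x).1
      rwa [abs_of_pos hxpos] at hb
    -- strict monotonicity of Γ on each piece
    have hΓlt : ∀ c u v : ℝ, u ∈ A ∩ {x : ℝ | ∀ d ∈ T, (d ≤ x ↔ d ≤ c)} →
        v ∈ A ∩ {x : ℝ | ∀ d ∈ T, (d ≤ x ↔ d ≤ c)} → u < v → Γ u < Γ v := by
      intro c u v hu hv huv
      have h := hmono u v huv.le (hkey c u v hu hv huv)
      have hd := hΓdiff u v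
      nlinarith
    refine ⟨𝒰, ?_, ?_, ?_⟩
    · have h1 : 𝒰.card ≤ T.card + 1 :=
        le_trans Finset.card_image_le (Finset.card_insert_le _ _)
      have h2 : (𝒰.card : ℝ) ≤ (T.card : ℝ) + 1 := by exact_mod_cast h1
      linarith
    · apply Set.Subset.antisymm
      · intro t ht
        by_cases hF : (T.filter (fun d => d ≤ t)).Nonempty
        · set c := (T.filter (fun d => d ≤ t)).max' hF with hcdef
          have hcT : c ∈ T := (Finset.mem_filter.1 (Finset.max'_mem _ hF)).1
          have hct : c ≤ t := (Finset.mem_filter.1 (Finset.max'_mem _ hF)).2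
          refine Set.mem_sUnion.2 ⟨A ∩ {x : ℝ | ∀ d ∈ T, (d ≤ x ↔ d ≤ c)}, ?_, ht, ?_⟩
          · exact Finset.mem_coe.2 (Finset.mem_image.2 ⟨c, Finset.mem_insert_of_mem hcT, rfl⟩)
          · intro d hd
            constructor
            · intro hdt
              exact Finset.le_max' (T.filter (fun d => d ≤ t)) d (Finset.mem_filter.2 ⟨hd, hdt⟩)
            · intro hdc
              exact le_trans hdc hct
        · refine Set.mem_sUnion.2 ⟨A ∩ {x : ℝ | ∀ d ∈ T, (d ≤ x ↔ d ≤ a - 1)}, ?_, ht, ?_⟩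
          · exact Finset.mem_coe.2 (Finset.mem_image.2 ⟨a-1, Finset.mem_insert_self _ _, rfl⟩)
          · intro d hd
            constructor
            · intro hdt
              exact absurd ⟨d, Finset.mem_filter.2 ⟨hd, hdt⟩⟩ hF
            · intro hd1
              exact absurd hd1 (by linarith [hTgt d hd])
      · intro t ht
        obtain ⟨U, hU, htU⟩ := ht
        obtain ⟨c, _, rfl⟩ := Finset.mem_image.1 (Finset.mem_coe.1 hU)
        exact htU.1
    · intro U hU
      obtain ⟨c, hc, rfl⟩ := Finset.mem_image.1 hU
      constructor
      · apply Set.ordConnected_of_Ioo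
        intro u hu v hv huv w hw
        have hwγ : c₀ ≤ γ w := hkey c u v hu hv huv w ⟨hw.1, hw.2.le⟩
        have hlow : c₀ * (w - u) ≤ ∫ s in u..w, γ s :=
          hmono u w hw.1.le (fun x hx => hkey c u v hu hv huv x ⟨hx.1, hx.2.trans hw.2.le⟩)
        have hhigh : c₀ * (v - w) ≤ ∫ s in w..v, γ s :=
          hmono w v hw.2.le (fun x hx => hkey c u v hu hv huv x ⟨lt_trans hw.1 hx.1, hx.2⟩)
        have hdu := hΓdiff u w
        have hdv := hΓdiff w v
        obtain ⟨⟨hu1, hu2⟩, _⟩ := (hAmem u).1 hu.1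
        obtain ⟨⟨hv1, hv2⟩, _⟩ := (hAmem v).1 hv.1
        have hp1 : 0 ≤ c₀ * (w - u) := mul_nonneg hc₀.le (by linarith [hw.1])
        have hp2 : 0 < c₀ * (v - w) := mul_pos hc₀ (by linarith [hw.2])
        refine ⟨(hAmem w).2 ⟨⟨?_, ?_⟩, by linarith⟩, ?_⟩
        · linarith
        · linarith
        · intro d hd
          constructor
          · intro hdw
            exact (hv.2 d hd).1 (le_trans hdw hw.2.le)
          · intro hdc
            exact le_trans ((hu.2 d hd).2 hdc) hw.1.le
      · intro u hu v hv h
        rcases lt_trichotomy u v with h' | h' | h'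
        · exact absurd h (ne_of_lt (hΓlt c u v hu hv h'))
        · exact h'
        · exact absurd h.symm (ne_of_lt (hΓlt c v u hv hu h'))
end
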